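/- (Symmetry for OLF) Let S be an OLF system on an odd number n of actors, and let i and j be distinct actors with the same set of successors and the same set of predecessors, i.e., S(i) = S(j) and P(i) = P(j). Then SAT_S(i) = SAT_S(j). -/

import Mathlib

open Finset

/-- The set of predecessors of `i` in the digraph with edge set `E`. -/
def preds {n : ℕ} (E : Finset (Fin n × Fin n)) (i : Fin n) : Finset (Fin n) :=
  Finset.univ.filter (fun j => (j, i) ∈ E)

/-- The set of successors of `i` in the digraph with edge set `E`. -/
def succs {n : ℕ} (E : Finset (Fin n × Fin n)) (i : Fin n) : Finset (Fin n) :=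
  Finset.univ.filter (fun j => (i, j) ∈ E)

/-- `E` is the edge set of an OLF system: every edge runs from a vertex with no
predecessors (an opinion leader) to a vertex with no successors (a follower). -/
def IsOLF {n : ℕ} (E : Finset (Fin n × Fin n)) : Prop :=
  ∀ e ∈ E, preds E e.1 = ∅ ∧ succs E e.2 = ∅

/-- One step of the unanimity rule: actor `i` adopts the common decision of its
predecessors (as recorded in `c`) if they are nonempty and unanimous, and keeps
its own initial decision `x i` otherwise. -/
def unanStep {n : ℕ} (E : Finset (Fin n × Fin n)) (x c : Fin n → Bool) (i : Fin n) : Bool :=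
  if (preds E i).Nonempty ∧ ∀ j ∈ preds E i, c j = true then true
  else if (preds E i).Nonempty ∧ ∀ j ∈ preds E i, c j = false then false
  else x i

/-- The collective decision vector of an OLF system. -/
def olfVec {n : ℕ} (E : Finset (Fin n × Fin n)) (x : Fin n → Bool) : Fin n → Bool :=
  unanStep E x x

/-- Simple majority over a decision vector. -/
def majority {n : ℕ} (c : Fin n → Bool) : Bool :=
  decide ((Finset.univ.filter (fun i => c i = true)).card >
          (Finset.univ.filter (fun i => c i = false)).card)

/-- The collective decision function of an OLF system. -/
def olfC {n : ℕ} (E : Finset (Fin n × Fin n)) (x : Fin n → Bool) : Bool :=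
  majority (olfVec E x)

/-- The satisfaction score of actor `i` under a collective decision making model `C`. -/
def SAT {n : ℕ} (C : (Fin n → Bool) → Bool) (i : Fin n) : ℕ :=
  (Finset.univ.filter (fun x : Fin n → Bool => C x = x i)).card

/-- Symmetry for OLF systems: two distinct actors with the same sets of
successors and predecessors have the same satisfaction score. -/
theorem olf_symmetry (n : ℕ) (hn : Odd n) (E : Finset (Fin n × Fin n)) (hE : IsOLF E)
    (i j : Fin n) (hij : i ≠ j)
    (hsucc : succs E i = succs E j) (hpred : preds E i = preds E j) :
    SAT (olfC E) i = SAT (olfC E) j := by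
  have mem_preds : ∀ (l k : Fin n), l ∈ preds E k ↔ (l, k) ∈ E := by
    intro l k; simp [preds]
  have h1 : ∀ k, (i, k) ∈ E ↔ (j, k) ∈ E := by
    intro k
    have := Finset.ext_iff.mp hsucc k
    simpa [succs] using this
  have h2 : ∀ k, (k, i) ∈ E ↔ (k, j) ∈ E := by
    intro k
    have := Finset.ext_iff.mp hpred k
    simpa [preds] using this
  set σ := Equiv.swap i j with hσ
  have hσσ : ∀ k, σ (σ k) = k := fun k => Equiv.swap_apply_self i j k
  have hmem : ∀ l k : Fin n, (l, k) ∈ E → (σ l, σ k) ∈ E := by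
    intro l k hlk
    have hL : ∀ m, (m, l) ∉ E := by
      intro m hm
      have h := (hE _ hlk).1
      have hml : m ∈ preds E l := (mem_preds m l).mpr hm
      simp only [h, Finset.notMem_empty] at hml
    simp only [hσ, Equiv.swap_apply_def]
    split_ifs <;> subst_vars <;>
      first
        | exact absurd hlk (hL _)
        | exact absurd ((h2 _).mpr hlk) (hL _)
        | exact absurd ((h2 _).mp hlk) (hL _)
        | exact (h1 _).mp hlk
        | exact (h1 _).mpr hlk
        | exact (h2 _).mp hlk
        | exact (h2 _).mpr hlk
        | exact hlk
  have hmem_iff : ∀ l k : Fin n, (σ l, σ k) ∈ E ↔ (l, k) ∈ E := by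
    intro l k
    constructor
    · intro h
      have := hmem _ _ h
      simpa [hσσ] using this
    · exact hmem l k
  have himg : ∀ k, preds E (σ k) = (preds E k).image σ := by
    intro k
    ext l
    simp only [Finset.mem_image, mem_preds]
    constructor
    · intro h
      exact ⟨σ l, by simpa [hσσ] using hmem _ _ h, hσσ l⟩
    · rintro ⟨m, hm, rfl⟩
      exact hmem _ _ hm
  have hvec : ∀ (x : Fin n → Bool) k, olfVec E (x ∘ σ) k = olfVec E x (σ k) := by
    intro x k
    simp only [olfVec, unanStep, himg, Finset.image_nonempty, Finset.forall_mem_image,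
      Function.comp]
  have hcard : ∀ (c : Fin n → Bool) (b : Bool),
      (Finset.univ.filter fun k => c (σ k) = b).card =
      (Finset.univ.filter fun k => c k = b).card := by
    intro c b
    apply Finset.card_bij' (fun k _ => σ k) (fun k _ => σ k)
    · intro a ha; simp only [Finset.mem_filter, Finset.mem_univ, true_and] at ha ⊢; exact ha
    · intro a ha; simp only [Finset.mem_filter, Finset.mem_univ, true_and] at ha ⊢
      simpa [hσσ] using ha
    · intro a _; exact hσσ a
    · intro a _; exact hσσ a
  have hmaj : ∀ x : Fin n → Bool, olfC E (x ∘ σ) = olfC E x := by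
    intro x
    have hv : olfVec E (x ∘ σ) = fun k => olfVec E x (σ k) := funext (hvec x)
    simp only [olfC, hv, majority, hcard]
  unfold SAT
  apply Finset.card_bij' (fun x _ => x ∘ σ) (fun x _ => x ∘ σ)
  · intro x hx
    simp only [Finset.mem_filter, Finset.mem_univ, true_and] at hx ⊢
    rw [hmaj, hx]
    simp [Function.comp, hσ, Equiv.swap_apply_right]
  · intro x hx
    simp only [Finset.mem_filter, Finset.mem_univ, true_and] at hx ⊢
    rw [hmaj, hx]
    simp [Function.comp, hσ, Equiv.swap_apply_left]
  · intro x _; funext k; simp [Function.comp, hσσ]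
  · intro x _; funext k; simp [Function.comp, hσσ]
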